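/- Under Assumptions (A5) and (A6), setting γ := max_{t∈T}(m_t − h_t − 1), one has γ ∈ (0,1] and Δ_w(n) = Θ(n^γ): there exist constants 0 < c₁ ≤ c₂ and N ∈ ℕ such that for all n ≥ N, c₁·n^γ ≤ Δ_w(n) ≤ c₂·n^γ. -/

import Mathlib

open MeasureTheory ProbabilityTheory Matrix Filter

/-- The spectral norm of a real square matrix. -/
noncomputable def specNorm {n : ℕ} (A : Matrix (Fin n) (Fin n) ℝ) : ℝ :=
  ‖Matrix.toEuclideanCLM (𝕜 := ℝ) A‖

/-- The `‖·‖_∞` norm of a matrix: maximum absolute row sum. -/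
noncomputable def rowSumNorm {n : ℕ} (A : Matrix (Fin n) (Fin n) ℝ) : ℝ :=
  ⨆ i, ∑ j, |A i j|

/-- The adjacency matrix of the complete graph on the vertices of the ordered list `k.2`. -/
def completeSub {T : Type} {m : T → ℕ} (n : ℕ)
    (k : Σ t : T, Fin (m t) ↪ Fin n) : Matrix (Fin n) (Fin n) ℝ :=
  fun i j => if i ≠ j ∧ (∃ a, k.2 a = i) ∧ (∃ b, k.2 b = j) then 1 else 0

section AuxSGM

lemma bernoulli_indicator {Ω : Type*} (f : Ω → ℝ) (h01 : ∀ ω, f ω = 0 ∨ f ω = 1) :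
    f = Set.indicator {ω | f ω = 1} (fun _ => (1:ℝ)) := by
  funext ω
  rcases h01 ω with h0 | h1
  · rw [h0]
    exact (Set.indicator_of_notMem (by simp [Set.mem_setOf_eq, h0]) (fun _ => (1:ℝ))).symm
  · rw [h1]
    exact (Set.indicator_of_mem (show ω ∈ {ω | f ω = 1} from h1) (fun _ => (1:ℝ))).symm

lemma bernoulli_integrable {Ω : Type*} [MeasurableSpace Ω] (μ : Measure Ω)
    [IsProbabilityMeasure μ] (f : Ω → ℝ) (hf : Measurable f)
    (h01 : ∀ ω, f ω = 0 ∨ f ω = 1) : Integrable f μ := by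
  have hS : MeasurableSet {ω | f ω = 1} := hf (measurableSet_singleton 1)
  rw [bernoulli_indicator f h01]
  exact (integrable_const 1).indicator hS

lemma bernoulli_integral {Ω : Type*} [MeasurableSpace Ω] (μ : Measure Ω)
    [IsProbabilityMeasure μ] (f : Ω → ℝ) (hf : Measurable f)
    (h01 : ∀ ω, f ω = 0 ∨ f ω = 1) (q : ℝ) (hq : 0 ≤ q)
    (hμ : μ {ω | f ω = 1} = ENNReal.ofReal q) : ∫ ω, f ω ∂μ = q := by
  have hS : MeasurableSet {ω | f ω = 1} := hf (measurableSet_singleton 1)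
  rw [bernoulli_indicator f h01]
  rw [show (fun _ : Ω => (1:ℝ)) = (1 : Ω → ℝ) from rfl]
  rw [integral_indicator_one hS, measureReal_def, hμ, ENNReal.toReal_ofReal hq]

lemma card_filter_contains_le (n mm : ℕ) (hmm : 1 ≤ mm) (i : Fin n) :
    ((Finset.univ.filter (fun L : Fin mm ↪ Fin n => ∃ a, L a = i)).card : ℕ)
      ≤ mm * n ^ (mm - 1) := by
  classical
  obtain ⟨M, rfl⟩ : ∃ M, mm = M + 1 := ⟨mm - 1, by omega⟩
  rcases isEmpty_or_nonempty (Fin (M + 1) ↪ Fin n) with he | hne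
  · simp [Finset.univ_eq_empty]
  · have hcard : (Finset.univ.filter (fun L : Fin (M+1) ↪ Fin n => ∃ a, L a = i)).card
        ≤ (Finset.univ : Finset (Fin (M+1) × (Fin M ↪ Fin n))).card := by
      set junk : Fin M ↪ Fin n := (Fin.succAboveEmb (0 : Fin (M+1))).trans hne.some with hjunk
      apply Finset.card_le_card_of_injOn
        (fun L => if h : ∃ a, L a = i
          then (h.choose, (Fin.succAboveEmb h.choose).trans L) else (0, junk))
        (fun _ _ => Finset.mem_univ _)
      intro L₁ h₁ L₂ h₂ heq
      rw [Finset.coe_filter, Set.mem_setOf_eq] at h₁ h₂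
      have e₁ := h₁.2
      have e₂ := h₂.2
      simp only [dif_pos e₁, dif_pos e₂, Prod.mk.injEq] at heq
      obtain ⟨ha, hg⟩ := heq
      refine DFunLike.ext _ _ fun b => ?_
      by_cases hb : b = e₁.choose
      · subst hb
        rw [e₁.choose_spec, ha, e₂.choose_spec]
      · obtain ⟨c, hc⟩ := Fin.exists_succAbove_eq hb
        have h1 := DFunLike.congr_fun hg c
        simp only [Function.Embedding.trans_apply, Fin.succAboveEmb_apply] at h1
        rw [← ha] at h1
        rw [← hc]
        exact h1
    refine hcard.trans ?_
    rw [Finset.card_univ, Fintype.card_prod, Fintype.card_fin, Fintype.card_embedding_eq,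
      Fintype.card_fin, Fintype.card_fin]
    simp only [Nat.add_sub_cancel]
    exact Nat.mul_le_mul_left _ (Nat.descFactorial_le_pow n M)

lemma card_pair_subtype_ge (n mm : ℕ) (hmm : 2 ≤ mm) (i j : Fin n) (hij : i ≠ j) :
    (n - 2).descFactorial (mm - 2)
      ≤ Nat.card {L : Fin mm ↪ Fin n // (∃ a, L a = i) ∧ (∃ b, L b = j)} := by
  classical
  obtain ⟨M, rfl⟩ : ∃ M, mm = M + 2 := ⟨mm - 2, by omega⟩
  simp only [Nat.add_sub_cancel]
  have hvs : Fintype.card {v : Fin n // v ≠ i ∧ v ≠ j} = n - 2 := by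
    rw [Fintype.card_subtype]
    have hset : Finset.univ.filter (fun v : Fin n => v ≠ i ∧ v ≠ j)
        = (Finset.univ.erase j).erase i := by
      ext v
      simp [Finset.mem_erase, and_comm]
    rw [hset, Finset.card_erase_of_mem (Finset.mem_erase.2 ⟨hij, Finset.mem_univ i⟩),
      Finset.card_erase_of_mem (Finset.mem_univ j), Finset.card_univ, Fintype.card_fin]
    omega
  have key : ∀ g : Fin M ↪ {v : Fin n // v ≠ i ∧ v ≠ j},
      Function.Injective (Fin.cons i (Fin.cons j (fun c => (g c : Fin n))) :
        Fin (M+2) → Fin n) := by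
    intro g a b hab
    induction a using Fin.cases with
    | zero =>
      induction b using Fin.cases with
      | zero => rfl
      | succ b' =>
        exfalso
        induction b' using Fin.cases with
        | zero =>
          rw [Fin.cons_zero, Fin.cons_succ, Fin.cons_zero] at hab
          exact hij hab
        | succ b'' =>
          rw [Fin.cons_zero, Fin.cons_succ, Fin.cons_succ] at hab
          exact (g b'').2.1 hab.symm
    | succ a' =>
      induction b using Fin.cases with
      | zero =>
        exfalso
        induction a' using Fin.cases with
        | zero =>
          rw [Fin.cons_succ, Fin.cons_zero, Fin.cons_zero] at hab
          exact hij hab.symm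
        | succ a'' =>
          rw [Fin.cons_succ, Fin.cons_succ, Fin.cons_zero] at hab
          exact (g a'').2.1 hab
      | succ b' =>
        rw [Fin.cons_succ, Fin.cons_succ] at hab
        congr 1
        induction a' using Fin.cases with
        | zero =>
          induction b' using Fin.cases with
          | zero => rfl
          | succ b'' =>
            exfalso
            rw [Fin.cons_zero, Fin.cons_succ] at hab
            exact (g b'').2.2 hab.symm
        | succ a'' =>
          induction b' using Fin.cases with
          | zero =>
            exfalso
            rw [Fin.cons_succ, Fin.cons_zero] at hab
            exact (g a'').2.2 hab
          | succ b'' =>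
            rw [Fin.cons_succ, Fin.cons_succ] at hab
            congr 1
            exact g.injective (Subtype.ext hab)
  set F : (Fin M ↪ {v : Fin n // v ≠ i ∧ v ≠ j})
      → {L : Fin (M+2) ↪ Fin n // (∃ a, L a = i) ∧ (∃ b, L b = j)} :=
    fun g => ⟨⟨Fin.cons i (Fin.cons j (fun c => (g c : Fin n))), key g⟩,
      ⟨0, by rw [Function.Embedding.coeFn_mk]; exact Fin.cons_zero _ _⟩,
      ⟨Fin.succ 0, by rw [Function.Embedding.coeFn_mk, Fin.cons_succ]; exact Fin.cons_zero _ _⟩⟩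
      with hFdef
  have hFinj : Function.Injective F := by
    intro g₁ g₂ hgg
    have h1 : (F g₁).1 = (F g₂).1 := congrArg Subtype.val hgg
    refine DFunLike.ext _ _ fun c => Subtype.ext ?_
    have := DFunLike.congr_fun h1 (c.succ.succ)
    simpa [hFdef, Fin.cons_succ] using this
  calc (n - 2).descFactorial M
      = Nat.card (Fin M ↪ {v : Fin n // v ≠ i ∧ v ≠ j}) := by
        rw [Nat.card_eq_fintype_card, Fintype.card_embedding_eq, Fintype.card_fin, hvs]
    _ ≤ _ := Nat.card_le_card_of_injective F hFinj

lemma final_numeric (n M₀ : ℕ) (hn : 2*M₀ + 6 ≤ n) (ξ₀ l₀ h₀ γ : ℝ)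
    (hξ : 0 < ξ₀) (hl : 0 < l₀) (hγ : γ = ((M₀:ℝ) + 2) - h₀ - 1) :
    (l₀ * ξ₀ / 2^(M₀+1)) * (n:ℝ)^γ
      ≤ ((n-1:ℕ):ℝ) * ((ξ₀ * ((n-2).descFactorial M₀ : ℝ)) * (l₀ / (n:ℝ)^h₀)) := by
  have hnR : (2*(M₀:ℝ)+6) ≤ (n:ℝ) := by exact_mod_cast hn
  have hM0 : (0:ℝ) ≤ (M₀:ℝ) := Nat.cast_nonneg _
  have hn0 : (0:ℝ) < (n:ℝ) := by linarith
  have hA : (0:ℝ) < (n:ℝ)^h₀ := Real.rpow_pos_of_pos hn0 _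
  have hdf : (n - 1 - M₀)^M₀ ≤ (n-2).descFactorial M₀ := by
    have h1 := Nat.pow_sub_le_descFactorial (n-2) M₀
    have heq : n - 2 + 1 - M₀ = n - 1 - M₀ := by omega
    rwa [heq] at h1
  have hcast1 : ((n-1-M₀ : ℕ):ℝ) = (n:ℝ) - 1 - (M₀:ℝ) := by
    rw [Nat.cast_sub (by omega), Nat.cast_sub (by omega), Nat.cast_one]
  have hcast2 : ((n-1 : ℕ):ℝ) = (n:ℝ) - 1 := by
    rw [Nat.cast_sub (by omega), Nat.cast_one]
  have hdfR : ((n:ℝ)-1-(M₀:ℝ))^M₀ ≤ ((n-2).descFactorial M₀ : ℝ) := by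
    calc ((n:ℝ)-1-(M₀:ℝ))^M₀ = (((n-1-M₀:ℕ)):ℝ)^M₀ := by rw [hcast1]
      _ = (((n-1-M₀)^M₀ : ℕ) : ℝ) := by push_cast; rfl
      _ ≤ _ := by exact_mod_cast hdf
  have hγpow : (n:ℝ)^γ = (n:ℝ)^((M₀+1:ℕ)) / (n:ℝ)^h₀ := by
    rw [hγ, show ((M₀:ℝ)+2) - h₀ - 1 = ((M₀+1:ℕ):ℝ) - h₀ by push_cast; ring,
      Real.rpow_sub hn0, Real.rpow_natCast]
  rw [hγpow]
  have key : ((n:ℝ)/2)^(M₀+1) ≤ ((n:ℝ)-1) * (((n:ℝ)-1-(M₀:ℝ))^M₀) := by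
    have h1 : (n:ℝ)/2 ≤ (n:ℝ)-1 := by linarith
    have h2 : (n:ℝ)/2 ≤ (n:ℝ)-1-(M₀:ℝ) := by linarith
    have h3 : (0:ℝ) ≤ (n:ℝ)/2 := by positivity
    calc ((n:ℝ)/2)^(M₀+1) = ((n:ℝ)/2) * ((n:ℝ)/2)^M₀ := by rw [pow_succ]; ring
      _ ≤ ((n:ℝ)-1) * (((n:ℝ)-1-(M₀:ℝ))^M₀) :=
          mul_le_mul h1 (pow_le_pow_left₀ h3 h2 M₀) (by positivity) (by linarith)
  have core : (l₀ * ξ₀ / 2^(M₀+1)) * (n:ℝ)^((M₀+1:ℕ))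
      ≤ ((n:ℝ)-1) * (ξ₀ * ((n-2).descFactorial M₀ : ℝ) * l₀) := by
    have e1 : (l₀ * ξ₀ / 2^(M₀+1)) * (n:ℝ)^((M₀+1:ℕ))
        = (l₀ * ξ₀) * (((n:ℝ)/2)^(M₀+1)) := by
      rw [div_pow]; ring
    have hd1 : (0:ℝ) ≤ (n:ℝ) - 1 := by linarith
    calc (l₀ * ξ₀ / 2^(M₀+1)) * (n:ℝ)^((M₀+1:ℕ))
        = (l₀ * ξ₀) * (((n:ℝ)/2)^(M₀+1)) := e1
      _ ≤ (l₀ * ξ₀) * (((n:ℝ)-1) * (((n:ℝ)-1-(M₀:ℝ))^M₀)) :=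
          mul_le_mul_of_nonneg_left key (by positivity)
      _ ≤ (l₀ * ξ₀) * (((n:ℝ)-1) * ((n-2).descFactorial M₀ : ℝ)) := by
          apply mul_le_mul_of_nonneg_left _ (by positivity)
          exact mul_le_mul_of_nonneg_left hdfR hd1
      _ = ((n:ℝ)-1) * (ξ₀ * ((n-2).descFactorial M₀ : ℝ) * l₀) := by ring
  calc (l₀ * ξ₀ / 2^(M₀+1)) * ((n:ℝ)^((M₀+1:ℕ)) / (n:ℝ)^h₀)
      = ((l₀ * ξ₀ / 2^(M₀+1)) * (n:ℝ)^((M₀+1:ℕ))) / (n:ℝ)^h₀ := by ring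
    _ ≤ (((n:ℝ)-1) * (ξ₀ * ((n-2).descFactorial M₀ : ℝ) * l₀)) / (n:ℝ)^h₀ := by
        gcongr
    _ = ((n-1:ℕ):ℝ) * ((ξ₀ * ((n-2).descFactorial M₀ : ℝ)) * (l₀ / (n:ℝ)^h₀)) := by
        rw [hcast2]; ring

end AuxSGM

/-- Lemma 8. Under (A5) and (A6), with `γ = max_t (m_t − h_t − 1)`,
one has `γ ∈ (0,1]` and `Δ_w(n) = Θ(n^γ)`. -/
theorem deltaW_asymptotics
    {T : Type} [Fintype T] [DecidableEq T] [Nonempty T]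
    (m : T → ℕ) (hm2 : ∀ t, 2 ≤ m t)
    -- the generating probabilities p_n(t,L)
    (p : (n : ℕ) → (Σ t : T, Fin (m t) ↪ Fin n) → ℝ)
    (hp : ∀ n k, p n k ∈ Set.Icc (0 : ℝ) 1)
    -- the probability spaces and the independent Bernoulli families x(t,L)
    {Ω : ℕ → Type} [∀ n, MeasurableSpace (Ω n)]
    (μ : (n : ℕ) → Measure (Ω n)) [∀ n, IsProbabilityMeasure (μ n)]
    (x : (n : ℕ) → (Σ t : T, Fin (m t) ↪ Fin n) → Ω n → ℝ)
    (hxmeas : ∀ n k, Measurable (x n k))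
    (hx01 : ∀ n k ω, x n k ω = 0 ∨ x n k ω = 1)
    (hxp : ∀ n k, μ n {ω | x n k ω = 1} = ENNReal.ofReal (p n k))
    (hindep : ∀ n, iIndepFun (x n) (μ n))
    -- the weighted adjacency matrix, its expectation, and Δ_w
    (Aw : (n : ℕ) → Ω n → Matrix (Fin n) (Fin n) ℝ)
    (hAw : ∀ n ω, Aw n ω = ∑ k, x n k ω • completeSub n k)
    (EAw : (n : ℕ) → Matrix (Fin n) (Fin n) ℝ)
    (hEAw : ∀ n i j, EAw n i j = ∫ ω, Aw n ω i j ∂(μ n))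
    (Δw : ℕ → ℝ) (hΔw : ∀ n, Δw n = rowSumNorm (EAw n))
    -- Assumption (A5)
    (h l u : T → ℝ)
    (hl : ∀ t, 0 < l t) (hlu : ∀ t, l t < u t)
    (hh1 : ∀ t, (m t : ℝ) - 2 < h t) (hh2 : ∀ t, h t < (m t : ℝ) - 1)
    (hA5 : ∀ n k, p n k = 0 ∨
      ∃ b ∈ Set.Icc (l k.1) (u k.1), p n k = b / (n : ℝ) ^ (h k.1))
    -- Assumption (A6)
    (ξ : T → ℝ) (hξ : ∀ t, ξ t ∈ Set.Ioo (0 : ℝ) 1)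
    (hA6a : ∀ (n : ℕ) (t : T),
      ξ t * (Nat.card (Fin (m t) ↪ Fin n) : ℝ) ≤
        (Nat.card {L : Fin (m t) ↪ Fin n // 0 < p n ⟨t, L⟩} : ℝ))
    (hA6b : ∀ (n : ℕ) (t : T) (i j : Fin n),
      ξ t * (Nat.card {L : Fin (m t) ↪ Fin n // (∃ a, L a = i) ∧ (∃ b, L b = j)} : ℝ) ≤
        (Nat.card {L : Fin (m t) ↪ Fin n //
          ((∃ a, L a = i) ∧ (∃ b, L b = j)) ∧ 0 < p n ⟨t, L⟩} : ℝ))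
    (γ : ℝ) (hγ : γ = ⨆ t : T, ((m t : ℝ) - h t - 1)) :
    (0 < γ ∧ γ ≤ 1) ∧
    ∃ (c₁ c₂ : ℝ) (N : ℕ), 0 < c₁ ∧ c₁ ≤ c₂ ∧
      ∀ n : ℕ, N ≤ n →
        c₁ * (n : ℝ) ^ γ ≤ Δw n ∧ Δw n ≤ c₂ * (n : ℝ) ^ γ := by
  classical
  obtain ⟨t₀, ht₀⟩ := Finite.exists_max (fun t => (m t : ℝ) - h t - 1)
  have hγ' : γ = (m t₀ : ℝ) - h t₀ - 1 := by
    rw [hγ]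
    exact le_antisymm (ciSup_le ht₀)
      (le_ciSup (f := fun t => (m t : ℝ) - h t - 1)
        (Set.Finite.bddAbove (Set.finite_range _)) t₀)
  have hγpos : 0 < γ := by have := hh2 t₀; rw [hγ']; linarith
  have hγle : γ ≤ 1 := by have := hh1 t₀; rw [hγ']; linarith
  refine ⟨⟨hγpos, hγle⟩, ?_⟩
  obtain ⟨M₀, hM₀⟩ : ∃ M, m t₀ = M + 2 := ⟨m t₀ - 2, by have := hm2 t₀; omega⟩
  set c₁ : ℝ := l t₀ * ξ t₀ / 2 ^ (M₀ + 1) with hc₁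
  have hc₁pos : 0 < c₁ := div_pos (mul_pos (hl t₀) (hξ t₀).1) (by positivity)
  set cs : ℝ := ∑ t, (m t : ℝ)^2 * u t with hcs
  refine ⟨c₁, max c₁ cs, 2 * M₀ + 6, hc₁pos, le_max_left _ _, ?_⟩
  intro n hn
  have hu : ∀ t, 0 < u t := fun t => (hl t).trans (hlu t)
  have hnpos : 0 < n := by omega
  have hn0 : (0:ℝ) < (n:ℝ) := by exact_mod_cast hnpos
  have hn1 : (1:ℝ) ≤ (n:ℝ) := by exact_mod_cast hnpos
  haveI : Nonempty (Fin n) := Fin.pos_iff_nonempty.1 hnpos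
  have hnh : ∀ t, (0:ℝ) < (n:ℝ) ^ (h t) := fun t => Real.rpow_pos_of_pos hn0 _
  -- expectation formula
  have hEA : ∀ i j : Fin n, EAw n i j = ∑ k, p n k * completeSub n k i j := by
    intro i j
    rw [hEAw]
    have step1 : (∫ ω, Aw n ω i j ∂ μ n)
        = ∫ ω, ∑ k, x n k ω * completeSub n k i j ∂ μ n := by
      refine integral_congr_ae (Filter.Eventually.of_forall fun ω => ?_)
      show Aw n ω i j = ∑ k : (t : T) × (Fin (m t) ↪ Fin n), x n k ω * completeSub n k i j
      rw [hAw]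
      simp [Matrix.sum_apply]
    rw [step1, integral_finset_sum _ (fun k _ =>
      (bernoulli_integrable (μ n) _ (hxmeas n k) (hx01 n k)).mul_const _)]
    refine Finset.sum_congr rfl fun k _ => ?_
    rw [integral_mul_const,
      bernoulli_integral (μ n) _ (hxmeas n k) (hx01 n k) _ (hp n k).1 (hxp n k)]
  have hcsnn : ∀ (k : Σ t : T, Fin (m t) ↪ Fin n) (i j : Fin n),
      0 ≤ completeSub n k i j := by
    intro k i j
    unfold completeSub
    split <;> norm_num
  have hEAnn : ∀ i j : Fin n, 0 ≤ EAw n i j := by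
    intro i j
    rw [hEA]
    exact Finset.sum_nonneg fun k _ => mul_nonneg (hp n k).1 (hcsnn k i j)
  have hrowabs : ∀ i : Fin n, (∑ j, |EAw n i j|) = ∑ j, EAw n i j :=
    fun i => Finset.sum_congr rfl fun j _ => abs_of_nonneg (hEAnn i j)
  -- row formula per subgraph
  have hcsrow : ∀ (k : Σ t : T, Fin (m t) ↪ Fin n) (i : Fin n),
      (∑ j, completeSub n k i j) = if ∃ a, k.2 a = i then ((m k.1 : ℝ) - 1) else 0 := by
    intro k i
    by_cases hi : ∃ a, k.2 a = i
    · rw [if_pos hi]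
      have h1 : ∀ j : Fin n, completeSub n k i j
          = if (j ≠ i ∧ ∃ b, k.2 b = j) then (1:ℝ) else 0 := by
        intro j
        unfold completeSub
        refine if_congr ?_ rfl rfl
        constructor
        · rintro ⟨ha, _, hc⟩; exact ⟨Ne.symm ha, hc⟩
        · rintro ⟨ha, hb⟩; exact ⟨Ne.symm ha, hi, hb⟩
      rw [Finset.sum_congr rfl fun j _ => h1 j, Finset.sum_boole]
      have hset : Finset.univ.filter (fun j : Fin n => j ≠ i ∧ ∃ b, k.2 b = j)
          = (Finset.univ.image k.2).erase i := by
        ext v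
        simp [Finset.mem_erase, Finset.mem_image]
      obtain ⟨a, ha⟩ := hi
      rw [hset, Finset.card_erase_of_mem (Finset.mem_image.2 ⟨a, Finset.mem_univ a, ha⟩),
        Finset.card_image_of_injective _ k.2.injective, Finset.card_univ, Fintype.card_fin,
        Nat.cast_sub (by have := hm2 k.1; omega), Nat.cast_one]
    · rw [if_neg hi]
      refine Finset.sum_eq_zero fun j _ => ?_
      unfold completeSub
      rw [if_neg (by tauto)]
  have hrowk : ∀ i : Fin n, (∑ j, EAw n i j)
      = ∑ k, p n k * (if ∃ a, k.2 a = i then ((m k.1 : ℝ) - 1) else 0) := by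
    intro i
    simp only [hEA]
    rw [Finset.sum_comm]
    exact Finset.sum_congr rfl fun k _ => by rw [← Finset.mul_sum, hcsrow]
  -- bounds on p
  have hpu : ∀ k : (Σ t : T, Fin (m t) ↪ Fin n), p n k ≤ u k.1 / (n:ℝ) ^ (h k.1) := by
    intro k
    rcases hA5 n k with h0 | ⟨b, hb, hpk⟩
    · rw [h0]
      exact div_nonneg (hu k.1).le (hnh k.1).le
    · rw [hpk]
      gcongr
      exact hb.2
  have hpl : ∀ k : (Σ t : T, Fin (m t) ↪ Fin n),
      0 < p n k → l k.1 / (n:ℝ) ^ (h k.1) ≤ p n k := by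
    intro k hk
    rcases hA5 n k with h0 | ⟨b, hb, hpk⟩
    · rw [h0] at hk; exact absurd hk (lt_irrefl 0)
    · rw [hpk]
      gcongr
      exact hb.1
  -- upper bound per row
  have hupper : ∀ i : Fin n, (∑ j, EAw n i j) ≤ cs * (n:ℝ)^γ := by
    intro i
    rw [hrowk i]
    have step1 : (∑ k : (Σ t : T, Fin (m t) ↪ Fin n),
        p n k * (if ∃ a, k.2 a = i then ((m k.1 : ℝ) - 1) else 0))
        ≤ ∑ k : (Σ t : T, Fin (m t) ↪ Fin n),
          (if ∃ a, k.2 a = i then (u k.1 / (n:ℝ)^(h k.1)) * ((m k.1 : ℝ) - 1) else 0) := by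
      refine Finset.sum_le_sum fun k _ => ?_
      have hm1 : (0:ℝ) ≤ (m k.1 : ℝ) - 1 := by
        have : (2:ℝ) ≤ (m k.1 : ℝ) := by exact_mod_cast hm2 k.1
        linarith
      by_cases hik : ∃ a, k.2 a = i
      · rw [if_pos hik, if_pos hik]
        exact mul_le_mul_of_nonneg_right (hpu k) hm1
      · rw [if_neg hik, if_neg hik, mul_zero]
    refine step1.trans ?_
    rw [← Finset.univ_sigma_univ, Finset.sum_sigma]
    have step2 : ∀ t : T, (∑ L : Fin (m t) ↪ Fin n,
        if ∃ a, L a = i then (u t / (n:ℝ)^(h t)) * ((m t : ℝ) - 1) else 0)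
        ≤ (m t : ℝ)^2 * u t * (n:ℝ)^γ := by
      intro t
      have hm1 : (0:ℝ) ≤ (m t : ℝ) - 1 := by
        have : (2:ℝ) ≤ (m t : ℝ) := by exact_mod_cast hm2 t
        linarith
      have hmle : (m t : ℝ) - 1 ≤ (m t : ℝ) := by linarith
      rw [← Finset.sum_filter, Finset.sum_const, nsmul_eq_mul]
      have hcount : ((Finset.univ.filter (fun L : Fin (m t) ↪ Fin n => ∃ a, L a = i)).card : ℝ)
          ≤ (m t : ℝ) * (n:ℝ) ^ ((m t) - 1 : ℕ) := by
        exact_mod_cast card_filter_contains_le n (m t) (by have := hm2 t; omega) i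
      have hpowle : (n:ℝ) ^ ((m t) - 1 : ℕ) / (n:ℝ)^(h t) ≤ (n:ℝ)^γ := by
        have h1 : ((n:ℝ) ^ ((m t) - 1 : ℕ) : ℝ) = (n:ℝ) ^ (((m t : ℝ)) - 1) := by
          rw [← Real.rpow_natCast (n:ℝ) (m t - 1), Nat.cast_sub (by have := hm2 t; omega),
            Nat.cast_one]
        rw [h1, ← Real.rpow_sub hn0]
        apply Real.rpow_le_rpow_of_exponent_le hn1
        have := ht₀ t
        rw [hγ']
        linarith
      calc ((Finset.univ.filter (fun L : Fin (m t) ↪ Fin n => ∃ a, L a = i)).card : ℝ)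
            * ((u t / (n:ℝ)^(h t)) * ((m t : ℝ) - 1))
          ≤ ((m t : ℝ) * (n:ℝ) ^ ((m t) - 1 : ℕ)) * ((u t / (n:ℝ)^(h t)) * (m t : ℝ)) := by
            apply mul_le_mul hcount
              (mul_le_mul_of_nonneg_left hmle (le_of_lt (div_pos (hu t) (hnh t))))
              (mul_nonneg (le_of_lt (div_pos (hu t) (hnh t))) hm1)
              (by positivity)
        _ = (m t : ℝ)^2 * u t * ((n:ℝ) ^ ((m t) - 1 : ℕ) / (n:ℝ)^(h t)) := by ring
        _ ≤ (m t : ℝ)^2 * u t * (n:ℝ)^γ := by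
            exact mul_le_mul_of_nonneg_left hpowle (mul_nonneg (by positivity) (hu t).le)
    calc (∑ t : T, ∑ L : Fin (m t) ↪ Fin n,
          if ∃ a, (⟨t, L⟩ : Σ t : T, Fin (m t) ↪ Fin n).2 a = i
            then (u (⟨t, L⟩ : Σ t : T, Fin (m t) ↪ Fin n).1 /
              (n:ℝ)^(h (⟨t, L⟩ : Σ t : T, Fin (m t) ↪ Fin n).1))
              * ((m (⟨t, L⟩ : Σ t : T, Fin (m t) ↪ Fin n).1 : ℝ) - 1) else 0)
        ≤ ∑ t : T, (m t : ℝ)^2 * u t * (n:ℝ)^γ := Finset.sum_le_sum fun t _ => step2 t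
      _ = cs * (n:ℝ)^γ := by rw [hcs, Finset.sum_mul]
  -- lower bound
  have hlower : c₁ * (n:ℝ)^γ ≤ Δw n := by
    obtain ⟨i⟩ := ‹Nonempty (Fin n)›
    have hperj : ∀ j ∈ Finset.univ.erase i,
        (ξ t₀ * ((n-2).descFactorial M₀ : ℝ)) * (l t₀ / (n:ℝ)^(h t₀)) ≤ EAw n i j := by
      intro j hj
      have hji : j ≠ i := (Finset.mem_erase.1 hj).1
      rw [hEA i j, ← Finset.univ_sigma_univ, Finset.sum_sigma]
      have hslice : (∑ L : Fin (m t₀) ↪ Fin n,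
          p n ⟨t₀, L⟩ * completeSub n ⟨t₀, L⟩ i j)
          ≤ ∑ t : T, ∑ L : Fin (m t) ↪ Fin n, p n ⟨t, L⟩ * completeSub n ⟨t, L⟩ i j :=
        Finset.single_le_sum
          (f := fun t => ∑ L : Fin (m t) ↪ Fin n, p n ⟨t, L⟩ * completeSub n ⟨t, L⟩ i j)
          (fun t _ => Finset.sum_nonneg fun L _ => mul_nonneg (hp n _).1 (hcsnn _ i j))
          (Finset.mem_univ t₀)
      refine le_trans ?_ hslice
      have hLbound : ∀ L : Fin (m t₀) ↪ Fin n,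
          (if ((∃ a, L a = i) ∧ (∃ b, L b = j)) ∧ 0 < p n ⟨t₀, L⟩
            then l t₀ / (n:ℝ)^(h t₀) else 0) ≤ p n ⟨t₀, L⟩ * completeSub n ⟨t₀, L⟩ i j := by
        intro L
        by_cases hc : ((∃ a, L a = i) ∧ (∃ b, L b = j)) ∧ 0 < p n ⟨t₀, L⟩
        · rw [if_pos hc]
          have hcs1 : completeSub n ⟨t₀, L⟩ i j = 1 := by
            unfold completeSub
            rw [if_pos ⟨Ne.symm hji, hc.1.1, hc.1.2⟩]
          rw [hcs1, mul_one]
          exact hpl ⟨t₀, L⟩ hc.2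
        · rw [if_neg hc]
          exact mul_nonneg (hp n _).1 (hcsnn _ i j)
      refine le_trans ?_ (Finset.sum_le_sum fun L _ => hLbound L)
      rw [← Finset.sum_filter, Finset.sum_const, nsmul_eq_mul]
      have hbridge : ((Finset.univ.filter (fun L : Fin (m t₀) ↪ Fin n =>
          ((∃ a, L a = i) ∧ (∃ b, L b = j)) ∧ 0 < p n ⟨t₀, L⟩)).card : ℝ)
          = (Nat.card {L : Fin (m t₀) ↪ Fin n //
            ((∃ a, L a = i) ∧ (∃ b, L b = j)) ∧ 0 < p n ⟨t₀, L⟩} : ℝ) := by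
        rw [Nat.card_eq_fintype_card, Fintype.card_subtype]
      have hcard2 : ((n-2).descFactorial M₀ : ℝ)
          ≤ (Nat.card {L : Fin (m t₀) ↪ Fin n // (∃ a, L a = i) ∧ (∃ b, L b = j)} : ℝ) := by
        have := card_pair_subtype_ge n (m t₀) (hm2 t₀) i j (Ne.symm hji)
        rw [show m t₀ - 2 = M₀ by omega] at this
        exact_mod_cast this
      have hchain : ξ t₀ * ((n-2).descFactorial M₀ : ℝ)
          ≤ ((Finset.univ.filter (fun L : Fin (m t₀) ↪ Fin n =>
            ((∃ a, L a = i) ∧ (∃ b, L b = j)) ∧ 0 < p n ⟨t₀, L⟩)).card : ℝ) := by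
        rw [hbridge]
        calc ξ t₀ * ((n-2).descFactorial M₀ : ℝ)
            ≤ ξ t₀ * (Nat.card {L : Fin (m t₀) ↪ Fin n //
                (∃ a, L a = i) ∧ (∃ b, L b = j)} : ℝ) :=
              mul_le_mul_of_nonneg_left hcard2 (hξ t₀).1.le
          _ ≤ _ := hA6b n t₀ i j
      exact mul_le_mul_of_nonneg_right hchain (le_of_lt (div_pos (hl t₀) (hnh t₀)))
    have hsum : ((n-1:ℕ):ℝ) * ((ξ t₀ * ((n-2).descFactorial M₀ : ℝ)) * (l t₀ / (n:ℝ)^(h t₀)))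
        ≤ ∑ j ∈ Finset.univ.erase i, EAw n i j := by
      have := Finset.sum_le_sum hperj
      rwa [Finset.sum_const, Finset.card_erase_of_mem (Finset.mem_univ i),
        Finset.card_univ, Fintype.card_fin, nsmul_eq_mul] at this
    have hrow : c₁ * (n:ℝ)^γ ≤ ∑ j, |EAw n i j| := by
      rw [hrowabs i]
      refine le_trans ?_ (le_trans hsum
        (Finset.sum_le_sum_of_subset_of_nonneg (Finset.subset_univ _)
          (fun j _ _ => hEAnn i j)))
      rw [hc₁]
      exact final_numeric n M₀ hn (ξ t₀) (l t₀) (h t₀) γ (hξ t₀).1 (hl t₀)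
        (by rw [hγ', hM₀]; push_cast; ring)
    rw [hΔw]
    unfold rowSumNorm
    refine le_trans hrow ?_
    exact le_ciSup (f := fun i' => ∑ j, |EAw n i' j|)
      (Set.Finite.bddAbove (Set.finite_range _)) i
  refine ⟨hlower, ?_⟩
  rw [hΔw]
  unfold rowSumNorm
  refine ciSup_le fun i => ?_
  rw [hrowabs i]
  refine (hupper i).trans ?_
  exact mul_le_mul_of_nonneg_right (le_max_right _ _) (Real.rpow_nonneg hn0.le _)
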